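/- Let H ∈ (1/2, 1) and t > 0. Then ∫_{ℝ²} (∫_0^t (s - x₁)₊^{H/2 - 1} (s - x₂)₊^{H/2 - 1} ds)² dx₁ dx₂ = B(1-H, H/2)² · t^{2H} / (H(2H-1)). -/

import Mathlib

open MeasureTheory
open Set
open scoped ENNReal

/-- `(x)₊^γ`: `x ^ γ` if `x > 0`, and `0` otherwise. -/
noncomputable def pospow (x γ : ℝ) : ℝ := if 0 < x then x ^ γ else 0

/-- The Euler Beta function. -/
noncomputable def eulerBeta (p q : ℝ) : ℝ := ∫ x in (0:ℝ)..1, x ^ (p - 1) * (1 - x) ^ (q - 1)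

lemma pospow_nonneg (x γ : ℝ) : 0 ≤ pospow x γ := by
  unfold pospow; split
  · exact Real.rpow_nonneg (by linarith) _
  · exact le_refl 0

lemma pospow_of_pos {x : ℝ} (hx : 0 < x) (γ : ℝ) : pospow x γ = x ^ γ := if_pos hx

lemma pospow_of_nonpos {x : ℝ} (hx : x ≤ 0) (γ : ℝ) : pospow x γ = 0 := if_neg (not_lt.2 hx)

lemma measurable_pospow (γ : ℝ) : Measurable fun x => pospow x γ := by
  have : (fun x => pospow x γ) = (Ioi (0:ℝ)).indicator (fun x => Real.exp (Real.log x * γ)) := by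
    funext x
    rcases lt_or_ge 0 x with hx | hx
    · rw [pospow_of_pos hx, indicator_of_mem (mem_Ioi.2 hx), Real.rpow_def_of_pos hx]
    · rw [pospow_of_nonpos hx, indicator_of_notMem (by simpa using hx : x ∉ Ioi 0)]
  rw [this]
  exact ((Real.measurable_log.mul measurable_const).exp).indicator measurableSet_Ioi

lemma pospow_mul {d : ℝ} (hd : 0 < d) (x γ : ℝ) :
    pospow (d * x) γ = d ^ γ * pospow x γ := by
  rcases lt_or_ge 0 x with hx | hx
  · rw [pospow_of_pos hx, pospow_of_pos (by positivity), Real.mul_rpow hd.le hx.le]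
  · rw [pospow_of_nonpos hx, pospow_of_nonpos (by nlinarith), mul_zero]

lemma pospow_abs_le (x γ : ℝ) : |pospow x γ| ≤ |x ^ γ| := by
  unfold pospow; split
  · exact le_refl _
  · simp [abs_nonneg]

lemma betaFn_integrableOn {γ : ℝ} (h1 : -1 < γ) (h0 : γ < 0) (h2 : 2*γ < -1) :
    IntegrableOn (fun u : ℝ => pospow u γ * pospow (1+u) γ) (Ioi 0) := by
  have hmeas : Measurable fun u : ℝ => pospow u γ * pospow (1+u) γ :=
    (measurable_pospow γ).mul ((measurable_pospow γ).comp (measurable_const.add measurable_id))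
  have hIoc : IntegrableOn (fun u : ℝ => pospow u γ * pospow (1+u) γ) (Ioc 0 1) := by
    have hg : IntegrableOn (fun u : ℝ => u ^ γ) (Ioc 0 1) :=
      (intervalIntegrable_iff_integrableOn_Ioc_of_le zero_le_one).1
        (intervalIntegral.intervalIntegrable_rpow' h1)
    refine Integrable.mono hg hmeas.aestronglyMeasurable.restrict ?_
    refine (ae_restrict_iff' measurableSet_Ioc).2 (ae_of_all _ fun u hu => ?_)
    have hu0 : 0 < u := hu.1
    rw [Real.norm_eq_abs, Real.norm_eq_abs, pospow_of_pos hu0,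
      pospow_of_pos (by linarith : (0:ℝ) < 1 + u),
      abs_of_nonneg (by positivity), abs_of_nonneg (by positivity)]
    calc u ^ γ * (1+u) ^ γ ≤ u ^ γ * 1 := by
          refine mul_le_mul_of_nonneg_left ?_ (by positivity)
          exact Real.rpow_le_one_of_one_le_of_nonpos (by linarith) h0.le
      _ = u ^ γ := mul_one _
  have hIoi : IntegrableOn (fun u : ℝ => pospow u γ * pospow (1+u) γ) (Ioi 1) := by
    have hg : IntegrableOn (fun u : ℝ => u ^ (2*γ)) (Ioi 1) :=
      integrableOn_Ioi_rpow_of_lt h2 one_pos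
    refine Integrable.mono hg hmeas.aestronglyMeasurable.restrict ?_
    refine (ae_restrict_iff' measurableSet_Ioi).2 (ae_of_all _ fun u hu => ?_)
    have hu1 : (1:ℝ) < u := hu
    have hu0 : (0:ℝ) < u := by linarith
    rw [Real.norm_eq_abs, Real.norm_eq_abs, pospow_of_pos hu0,
      pospow_of_pos (by linarith : (0:ℝ) < 1 + u),
      abs_of_nonneg (by positivity), abs_of_nonneg (by positivity)]
    calc u ^ γ * (1+u) ^ γ ≤ u ^ γ * u ^ γ := by
          refine mul_le_mul_of_nonneg_left ?_ (by positivity)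
          exact Real.rpow_le_rpow_of_nonpos hu0 (by linarith) h0.le
      _ = u ^ (2*γ) := by rw [← Real.rpow_add hu0, two_mul]
  have := hIoc.union hIoi
  rwa [Ioc_union_Ioi_eq_Ioi zero_le_one] at this

lemma beta_val {H : ℝ} (hH : H ∈ Set.Ioo (1/2:ℝ) 1) :
    ∫ u in Ioi (0:ℝ), pospow u (H/2-1) * pospow (1+u) (H/2-1) = eulerBeta (1-H) (H/2) := by
  obtain ⟨hH1, hH2⟩ := hH
  set γ : ℝ := H/2 - 1 with hγ
  -- Step 1: eulerBeta symmetry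
  have sym : eulerBeta (1-H) (H/2) = ∫ x in (0:ℝ)..1, x ^ γ * (1-x) ^ (-H) := by
    have key := intervalIntegral.integral_comp_sub_left (a := (0:ℝ)) (b := 1)
      (fun x => x ^ γ * (1-x) ^ (-H)) 1
    simp only [sub_sub_cancel, sub_zero, sub_self] at key
    rw [eulerBeta, ← key]
    congr 1
    funext x
    rw [show (1 - H - 1 : ℝ) = -H by ring, show (H/2 - 1 : ℝ) = γ from rfl]
    ring
  -- Step 2: to Ioo
  have toIoo : (∫ x in (0:ℝ)..1, x ^ γ * (1-x) ^ (-H))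
      = ∫ x in Ioo (0:ℝ) 1, x ^ γ * (1-x) ^ (-H) := by
    rw [intervalIntegral.integral_of_le zero_le_one, integral_Ioc_eq_integral_Ioo]
  -- Step 3: image
  have himg : (fun u : ℝ => u/(1+u)) '' Ioi 0 = Ioo 0 1 := by
    ext x
    constructor
    · rintro ⟨u, hu, rfl⟩
      have hu0 : (0:ℝ) < u := hu
      constructor
      · positivity
      · rw [div_lt_one (by linarith)]; linarith
    · rintro ⟨hx0, hx1⟩
      refine ⟨x / (1-x), ?_, ?_⟩
      · have : (0:ℝ) < 1 - x := by linarith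
        exact div_pos hx0 this
      · have h1x : (1:ℝ) - x ≠ 0 := by linarith
        field_simp
        ring
  have hderiv : ∀ u ∈ Ioi (0:ℝ),
      HasDerivWithinAt (fun u : ℝ => u/(1+u)) (1/(1+u)^2) (Ioi 0) u := by
    intro u hu
    have hu0 : (0:ℝ) < u := hu
    have h := (hasDerivAt_id u).div ((hasDerivAt_const u (1:ℝ)).add (hasDerivAt_id u))
      (by intro h; simp at h; linarith)
    have h' : HasDerivAt (fun u : ℝ => u/(1+u)) (1/(1+u)^2) u := by
      exact h.congr_deriv (by simp only [Pi.add_apply, id]; ring)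
    exact h'.hasDerivWithinAt
  have hinj : InjOn (fun u : ℝ => u/(1+u)) (Ioi 0) := by
    intro u hu v hv h
    have hu0 : (0:ℝ) < u := hu
    have hv0 : (0:ℝ) < v := hv
    have h1u : (1:ℝ) + u ≠ 0 := by linarith
    have h1v : (1:ℝ) + v ≠ 0 := by linarith
    field_simp at h
    linarith
  have himage := integral_image_eq_integral_abs_deriv_smul measurableSet_Ioi hderiv hinj
    (fun x => x ^ γ * (1-x) ^ (-H))
  rw [himg] at himage
  -- Step 4: identify integrand
  have hcongr : ∀ u ∈ Ioi (0:ℝ),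
      |1/(1+u)^2| • ((u/(1+u)) ^ γ * (1 - u/(1+u)) ^ (-H))
        = pospow u γ * pospow (1+u) γ := by
    intro u hu
    have hu0 : (0:ℝ) < u := hu
    have hv0 : (0:ℝ) < 1 + u := by linarith
    have h1 : 1 - u/(1+u) = 1/(1+u) := by field_simp; ring
    rw [smul_eq_mul, h1, pospow_of_pos hu0, pospow_of_pos hv0]
    have e1 : |1/(1+u)^2| = (1+u) ^ (-2:ℝ) := by
      rw [abs_of_pos (by positivity), Real.rpow_neg hv0.le, one_div]
      congr 1
      rw [show ((2:ℝ)) = ((2:ℕ):ℝ) by norm_num, Real.rpow_natCast]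
    have e2 : (u/(1+u)) ^ γ = u ^ γ * (1+u) ^ (-γ) := by
      rw [Real.div_rpow hu0.le hv0.le, Real.rpow_neg hv0.le, div_eq_mul_inv]
    have e3 : (1/(1+u)) ^ (-H) = (1+u) ^ H := by
      rw [one_div, Real.inv_rpow hv0.le, Real.rpow_neg hv0.le, inv_inv]
    rw [e1, e2, e3, mul_comm ((1+u) ^ (-2:ℝ)) _, mul_assoc, mul_assoc,
      ← Real.rpow_add hv0, ← Real.rpow_add hv0]
    congr 1
    rw [hγ]; ring
  rw [sym, toIoo, himage]
  exact (setIntegral_congr_fun measurableSet_Ioi hcongr).symm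

lemma lemA {H : ℝ} (hH : H ∈ Set.Ioo (1/2:ℝ) 1) {s r : ℝ} (hsr : s < r) :
    Integrable (fun y => pospow (s-y) (H/2-1) * pospow (r-y) (H/2-1)) ∧
    ∫ y : ℝ, pospow (s-y) (H/2-1) * pospow (r-y) (H/2-1)
      = eulerBeta (1-H) (H/2) * (r-s) ^ (H-1) := by
  obtain ⟨hH1, hH2⟩ := hH
  set γ : ℝ := H/2 - 1 with hγ
  have h1 : (-1:ℝ) < γ := by rw [hγ]; linarith
  have h0 : γ < 0 := by rw [hγ]; linarith
  have h2 : 2*γ < -1 := by rw [hγ]; linarith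
  set d : ℝ := r - s with hd'
  have hd : 0 < d := by rw [hd']; linarith
  set J : ℝ → ℝ := fun y => pospow (s-y) γ * pospow (r-y) γ with hJ
  set φ : ℝ → ℝ := fun u => s - d*u with hφ
  have himg : φ '' Ioi 0 = Iio s := by
    ext y
    constructor
    · rintro ⟨u, hu, rfl⟩
      have hu0 : (0:ℝ) < u := hu
      simp only [hφ, mem_Iio]
      nlinarith
    · intro hy
      have hy' : y < s := hy
      refine ⟨(s - y)/d, div_pos (by linarith) hd, ?_⟩
      simp only [hφ]
      field_simp
      ring
  have hderiv : ∀ u ∈ Ioi (0:ℝ), HasDerivWithinAt φ (-d) (Ioi 0) u := by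
    intro u _
    have h := (hasDerivAt_const u s).sub ((hasDerivAt_id u).const_mul d)
    have h' : HasDerivAt φ (-d) u := by
      rw [hφ]
      exact h.congr_deriv (by ring)
    exact h'.hasDerivWithinAt
  have hinj : InjOn φ (Ioi 0) := by
    intro u _ v _ h
    simp only [hφ] at h
    have : d * u = d * v := by linarith
    exact mul_left_cancel₀ hd.ne' this
  have key : ∀ u ∈ Ioi (0:ℝ),
      |(-d)| • J (φ u) = d ^ (H-1) * (pospow u γ * pospow (1+u) γ) := by
    intro u hu
    have hu0 : (0:ℝ) < u := hu
    have e1 : s - φ u = d * u := by simp only [hφ]; ring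
    have e2 : r - φ u = d * (1+u) := by simp only [hφ, hd']; ring
    have hC : d * (d ^ γ * d ^ γ) = d ^ (H-1) := by
      rw [show (H-1 : ℝ) = 1 + (γ + γ) by rw [hγ]; ring, Real.rpow_add hd,
        Real.rpow_add hd, Real.rpow_one]
    rw [smul_eq_mul, abs_neg, abs_of_pos hd, hJ]
    simp only [e1, e2, pospow_mul hd]
    rw [← hC]; ring
  have hvanish : ∀ y ∉ Iio s, J y = 0 := by
    intro y hy
    have : s - y ≤ 0 := by simp only [mem_Iio, not_lt] at hy; linarith
    simp only [hJ, pospow_of_nonpos this, zero_mul]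
  have himage := integral_image_eq_integral_abs_deriv_smul measurableSet_Ioi hderiv hinj J
  rw [himg] at himage
  have hbase := betaFn_integrableOn h1 h0 h2
  have hIoiInt : IntegrableOn (fun u => |(-d)| • J (φ u)) (Ioi 0) :=
    IntegrableOn.congr_fun (hbase.const_mul (d ^ (H-1)))
      (fun u hu => (key u hu).symm) measurableSet_Ioi
  have hIio : IntegrableOn J (Iio s) := by
    rw [← himg]
    exact (integrableOn_image_iff_integrableOn_abs_deriv_smul measurableSet_Ioi hderiv hinj J).2
      hIoiInt
  have hint : Integrable J := by
    have hsupp : (Iio s).indicator J = J := by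
      apply indicator_eq_self.2
      intro y hy
      by_contra h
      exact hy (hvanish y h)
    rw [← hsupp]
    exact hIio.integrable_indicator measurableSet_Iio
  refine ⟨hint, ?_⟩
  calc ∫ y : ℝ, J y = ∫ y in Iio s, J y :=
        (setIntegral_eq_integral_of_forall_compl_eq_zero hvanish).symm
    _ = ∫ u in Ioi 0, |(-d)| • J (φ u) := himage
    _ = ∫ u in Ioi 0, d ^ (H-1) * (pospow u γ * pospow (1+u) γ) :=
        setIntegral_congr_fun measurableSet_Ioi key
    _ = d ^ (H-1) * ∫ u in Ioi 0, pospow u γ * pospow (1+u) γ := by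
        rw [integral_const_mul]
    _ = eulerBeta (1-H) (H/2) * d ^ (H-1) := by
        rw [beta_val ⟨hH1, hH2⟩, mul_comm]

/-- The lintegral version of Lemma A, symmetrized. -/
lemma lemA2 {H : ℝ} (hH : H ∈ Set.Ioo (1/2:ℝ) 1) {s r : ℝ} (hsr : s ≠ r) :
    ∫⁻ y : ℝ, ENNReal.ofReal (pospow (s-y) (H/2-1)) * ENNReal.ofReal (pospow (r-y) (H/2-1))
      = ENNReal.ofReal (eulerBeta (1-H) (H/2) * |s-r| ^ (H-1)) := by
  have base : ∀ a b : ℝ, a < b →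
      ∫⁻ y : ℝ, ENNReal.ofReal (pospow (a-y) (H/2-1)) * ENNReal.ofReal (pospow (b-y) (H/2-1))
        = ENNReal.ofReal (eulerBeta (1-H) (H/2) * (b-a) ^ (H-1)) := by
    intro a b hab
    obtain ⟨hint, hval⟩ := lemA hH hab
    calc ∫⁻ y : ℝ, ENNReal.ofReal (pospow (a-y) (H/2-1)) * ENNReal.ofReal (pospow (b-y) (H/2-1))
        = ∫⁻ y : ℝ, ENNReal.ofReal (pospow (a-y) (H/2-1) * pospow (b-y) (H/2-1)) :=
          lintegral_congr fun y => (ENNReal.ofReal_mul (pospow_nonneg _ _)).symm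
      _ = ENNReal.ofReal (∫ y : ℝ, pospow (a-y) (H/2-1) * pospow (b-y) (H/2-1)) :=
          (ofReal_integral_eq_lintegral_ofReal hint
            (ae_of_all _ fun y => mul_nonneg (pospow_nonneg _ _) (pospow_nonneg _ _))).symm
      _ = ENNReal.ofReal (eulerBeta (1-H) (H/2) * (b-a) ^ (H-1)) := by rw [hval]
  rcases hsr.lt_or_gt with h | h
  · rw [abs_sub_comm, abs_of_pos (by linarith : (0:ℝ) < r - s)]
    exact base s r h
  · rw [abs_of_pos (by linarith : (0:ℝ) < s - r)]
    rw [show (fun y : ℝ => ENNReal.ofReal (pospow (s-y) (H/2-1))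
        * ENNReal.ofReal (pospow (r-y) (H/2-1)))
      = fun y : ℝ => ENNReal.ofReal (pospow (r-y) (H/2-1))
        * ENNReal.ofReal (pospow (s-y) (H/2-1)) from funext fun y => mul_comm _ _]
    exact base r s h

lemma diag_null (μ ν : Measure ℝ) [SFinite ν] (hν : ∀ x : ℝ, ν {x} = 0) :
    (μ.prod ν) {p : ℝ × ℝ | p.1 = p.2} = 0 := by
  have hm : MeasurableSet {p : ℝ × ℝ | p.1 = p.2} :=
    measurableSet_eq_fun measurable_fst measurable_snd
  rw [Measure.prod_apply hm]
  have h : ∀ x : ℝ, ν (Prod.mk x ⁻¹' {p : ℝ × ℝ | p.1 = p.2}) = 0 := by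
    intro x
    have : (Prod.mk x ⁻¹' {p : ℝ × ℝ | p.1 = p.2}) = {x} := by ext y; simp [eq_comm]
    rw [this]; exact hν x
  simp [h, hν]

lemma pospow_shift_integrableOn {γ : ℝ} (h1 : -1 < γ) (b c e : ℝ) :
    IntegrableOn (fun u : ℝ => pospow (u - b) γ) (Ioc c e) := by
  rcases le_or_gt c e with hce | hce
  · have hg : IntervalIntegrable (fun x : ℝ => (x - b) ^ γ) volume c e := by
      have := (intervalIntegral.intervalIntegrable_rpow' (a := c - b) (b := e - b) h1).comp_sub_right b
      simpa using this
    have hg' : IntegrableOn (fun x : ℝ => (x - b) ^ γ) (Ioc c e) :=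
      (intervalIntegrable_iff_integrableOn_Ioc_of_le hce).1 hg
    refine Integrable.mono hg'
      (((measurable_pospow γ).comp (measurable_id.sub measurable_const)).aestronglyMeasurable.restrict) ?_
    exact ae_of_all _ fun u => by
      simpa [Real.norm_eq_abs] using pospow_abs_le (u - b) γ
  · simp [Ioc_eq_empty (not_lt.2 hce.le), integrableOn_empty]

lemma slice_int {H : ℝ} (hH : H ∈ Set.Ioo (1/2:ℝ) 1) {t a b : ℝ} (hab : a ≠ b) :
    IntegrableOn (fun u : ℝ => pospow (u-a) (H/2-1) * pospow (u-b) (H/2-1)) (Ioc 0 t) := by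
  obtain ⟨hH1, hH2⟩ := hH
  have h1 : (-1:ℝ) < H/2-1 := by linarith
  have h0 : (H/2-1 : ℝ) < 0 := by linarith
  have base : ∀ a b : ℝ, a < b →
      IntegrableOn (fun u : ℝ => pospow (u-a) (H/2-1) * pospow (u-b) (H/2-1)) (Ioc 0 t) := by
    intro a b hab'
    set γ : ℝ := H/2-1
    set d : ℝ := b - a with hd'
    have hd : 0 < d := by rw [hd']; linarith
    refine Integrable.mono ((pospow_shift_integrableOn h1 b 0 t).const_mul (d ^ γ))
      (((measurable_pospow γ).comp (measurable_id.sub measurable_const)).mul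
        ((measurable_pospow γ).comp (measurable_id.sub measurable_const))).aestronglyMeasurable.restrict ?_
    refine ae_of_all _ fun u => ?_
    rw [Real.norm_eq_abs, Real.norm_eq_abs,
      abs_of_nonneg (mul_nonneg (pospow_nonneg _ _) (pospow_nonneg _ _)),
      abs_of_nonneg (mul_nonneg (Real.rpow_nonneg hd.le _) (pospow_nonneg _ _))]
    rcases le_or_gt u b with hub | hub
    · rw [pospow_of_nonpos (by linarith : u - b ≤ 0), mul_zero, mul_zero]
    · have hua : d ≤ u - a := by rw [hd']; linarith
      rw [pospow_of_pos (by linarith : 0 < u - a)]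
      exact mul_le_mul_of_nonneg_right
        (Real.rpow_le_rpow_of_nonpos hd hua h0.le) (pospow_nonneg _ _)
  rcases hab.lt_or_gt with h | h
  · exact base a b h
  · have := base b a h
    refine this.congr_fun (fun u _ => mul_comm _ _) measurableSet_Ioc

lemma time_inner {H : ℝ} (hH : H ∈ Set.Ioo (1/2:ℝ) 1) {t s : ℝ} (hs0 : 0 ≤ s) (hst : s ≤ t) :
    IntervalIntegrable (fun r => |s - r| ^ (2*H-2)) volume 0 t ∧
    ∫ r in (0:ℝ)..t, |s - r| ^ (2*H-2)
      = (s^(2*H-1) + (t-s)^(2*H-1)) / (2*H-1) := by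
  obtain ⟨hH1, hH2⟩ := hH
  set p : ℝ := 2*H-2 with hp
  have hp1 : (-1:ℝ) < p := by rw [hp]; linarith
  have hp1' : (0:ℝ) < p + 1 := by linarith
  have II1 : IntervalIntegrable (fun r => |s - r| ^ p) volume 0 s := by
    have base := (intervalIntegral.intervalIntegrable_rpow' (a := 0) (b := s) hp1).comp_sub_left s
    simp only [sub_zero, sub_self] at base
    refine base.symm.congr ?_
    intro r hr
    rw [uIoc_of_le hs0] at hr
    show (s - r) ^ p = |s - r| ^ p
    rw [abs_of_nonneg (by linarith [hr.2] : (0:ℝ) ≤ s - r)]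
  have II2 : IntervalIntegrable (fun r => |s - r| ^ p) volume s t := by
    have base := (intervalIntegral.intervalIntegrable_rpow' (a := 0) (b := t - s) hp1).comp_sub_right s
    simp only [zero_add, sub_add_cancel] at base
    refine base.congr ?_
    intro r hr
    rw [uIoc_of_le hst] at hr
    show (r - s) ^ p = |s - r| ^ p
    rw [abs_of_nonpos (by linarith [hr.1] : s - r ≤ 0), neg_sub]
  have val1 : ∫ r in (0:ℝ)..s, |s - r| ^ p = s ^ (p+1) / (p+1) := by
    rw [intervalIntegral.integral_congr (g := fun r => (s - r) ^ p) ?_]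
    · have := intervalIntegral.integral_comp_sub_left (a := (0:ℝ)) (b := s) (fun x => x ^ p) s
      rw [this]
      simp only [sub_zero, sub_self]
      rw [integral_rpow (Or.inl hp1), Real.zero_rpow hp1'.ne', sub_zero]
    · intro r hr
      rw [uIcc_of_le hs0] at hr
      simp only
      rw [abs_of_nonneg (by linarith [hr.2] : (0:ℝ) ≤ s - r)]
  have val2 : ∫ r in s..t, |s - r| ^ p = (t-s) ^ (p+1) / (p+1) := by
    rw [intervalIntegral.integral_congr (g := fun r => (r - s) ^ p) ?_]
    · have := intervalIntegral.integral_comp_sub_right (a := s) (b := t) (fun x => x ^ p) s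
      rw [this]
      simp only [sub_self]
      rw [integral_rpow (Or.inl hp1), Real.zero_rpow hp1'.ne', sub_zero]
    · intro r hr
      rw [uIcc_of_le hst] at hr
      simp only
      rw [abs_of_nonpos (by linarith [hr.1] : s - r ≤ 0), neg_sub]
  refine ⟨II1.trans II2, ?_⟩
  rw [← intervalIntegral.integral_add_adjacent_intervals II1 II2, val1, val2,
    show p + 1 = 2*H - 1 by rw [hp]; ring]
  ring

lemma time_lintegral {H : ℝ} (hH : H ∈ Set.Ioo (1/2:ℝ) 1) {t : ℝ} (ht : 0 < t) :
    ∫⁻ s in Set.Ioc (0:ℝ) t, ∫⁻ r in Set.Ioc (0:ℝ) t, ENNReal.ofReal (|s - r| ^ (2*H-2))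
      = ENNReal.ofReal (t ^ (2*H) / (H * (2*H-1))) := by
  obtain ⟨hH1, hH2⟩ := hH
  have hq1 : (-1:ℝ) < 2*H-1 := by linarith
  have step1 : ∀ s ∈ Set.Ioc (0:ℝ) t,
      ∫⁻ r in Set.Ioc (0:ℝ) t, ENNReal.ofReal (|s - r| ^ (2*H-2))
        = ENNReal.ofReal ((s^(2*H-1) + (t-s)^(2*H-1)) / (2*H-1)) := by
    intro s hs
    obtain ⟨II, val⟩ := time_inner ⟨hH1, hH2⟩ hs.1.le hs.2
    rw [← val, intervalIntegral.integral_of_le ht.le]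
    exact (ofReal_integral_eq_lintegral_ofReal
      ((intervalIntegrable_iff_integrableOn_Ioc_of_le ht.le).1 II)
      (ae_of_all _ fun r => Real.rpow_nonneg (abs_nonneg _) _)).symm
  rw [setLIntegral_congr_fun measurableSet_Ioc step1]
  have hint : IntegrableOn (fun s : ℝ => (s^(2*H-1) + (t-s)^(2*H-1)) / (2*H-1)) (Set.Ioc 0 t) := by
    refine (intervalIntegrable_iff_integrableOn_Ioc_of_le ht.le).1 ?_
    refine IntervalIntegrable.div_const ?_ _
    refine (intervalIntegral.intervalIntegrable_rpow' hq1).add ?_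
    have base := (intervalIntegral.intervalIntegrable_rpow' (a := 0) (b := t) hq1).comp_sub_left t
    simpa using base.symm
  have hnn : 0 ≤ᵐ[volume.restrict (Set.Ioc (0:ℝ) t)]
      fun s : ℝ => (s^(2*H-1) + (t-s)^(2*H-1)) / (2*H-1) := by
    refine (ae_restrict_iff' measurableSet_Ioc).2 (ae_of_all _ fun s hs => ?_)
    have h1 : (0:ℝ) ≤ s ^ (2*H-1) := Real.rpow_nonneg hs.1.le _
    have h2 : (0:ℝ) ≤ (t-s) ^ (2*H-1) := Real.rpow_nonneg (by linarith [hs.2]) _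
    have h3 : (0:ℝ) < 2*H-1 := by linarith
    positivity
  rw [← ofReal_integral_eq_lintegral_ofReal hint hnn]
  congr 1
  rw [← intervalIntegral.integral_of_le ht.le]
  have e1 : ∫ s in (0:ℝ)..t, s ^ (2*H-1) = t ^ (2*H) / (2*H) := by
    rw [integral_rpow (Or.inl hq1),
      Real.zero_rpow (by linarith : (2*H-1) + 1 ≠ 0), sub_zero,
      show (2*H-1) + 1 = 2*H by ring]
  have e2 : ∫ s in (0:ℝ)..t, (t - s) ^ (2*H-1) = t ^ (2*H) / (2*H) := by
    have := intervalIntegral.integral_comp_sub_left (a := (0:ℝ)) (b := t)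
      (fun x => x ^ (2*H-1)) t
    rw [this]
    simp only [sub_zero, sub_self]
    rw [integral_rpow (Or.inl hq1),
      Real.zero_rpow (by linarith : (2*H-1) + 1 ≠ 0), sub_zero,
      show (2*H-1) + 1 = 2*H by ring]
  have II1 : IntervalIntegrable (fun s : ℝ => s ^ (2*H-1)) volume 0 t :=
    intervalIntegral.intervalIntegrable_rpow' hq1
  have II2 : IntervalIntegrable (fun s : ℝ => (t - s) ^ (2*H-1)) volume 0 t := by
    have base := (intervalIntegral.intervalIntegrable_rpow' (a := 0) (b := t) hq1).comp_sub_left t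
    simpa using base.symm
  rw [intervalIntegral.integral_div, intervalIntegral.integral_add II1 II2, e1, e2]
  have hH0 : H ≠ 0 := by linarith
  have h2H1 : 2*H - 1 ≠ 0 := by linarith
  field_simp
  ring

lemma pospow_abs_eq {q : ℝ} (hq : q ≠ 0) (x : ℝ) : pospow |x| q = |x| ^ q := by
  rcases eq_or_ne x 0 with rfl | hx
  · simp [pospow_of_nonpos le_rfl, Real.zero_rpow hq]
  · exact pospow_of_pos (abs_pos.2 hx) q

theorem sq_integral_rosenblatt_kernel (H : ℝ) (hH : H ∈ Set.Ioo (1/2 : ℝ) 1)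
    (t : ℝ) (ht : 0 < t) :
    ∫ x : ℝ × ℝ, (∫ s in (0:ℝ)..t, pospow (s - x.1) (H/2 - 1) * pospow (s - x.2) (H/2 - 1)) ^ 2
      = (eulerBeta (1 - H) (H/2)) ^ 2 * t ^ (2 * H) / (H * (2 * H - 1)) := by
  obtain ⟨hH1, hH2⟩ := hH
  set γ : ℝ := H/2 - 1 with hγ
  set c : ℝ := eulerBeta (1 - H) (H/2) with hc
  set μ : Measure ℝ := volume.restrict (Set.Ioc 0 t) with hμ
  set f : ℝ × ℝ → ℝ := fun x => ∫ s in (0:ℝ)..t, pospow (s - x.1) γ * pospow (s - x.2) γ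
    with hf
  -- basic facts
  have hc0 : 0 ≤ c := by
    rw [hc, eulerBeta]
    refine intervalIntegral.integral_nonneg zero_le_one fun x hx => ?_
    exact mul_nonneg (Real.rpow_nonneg hx.1 _) (Real.rpow_nonneg (by linarith [hx.2]) _)
  have hf_nonneg : ∀ x, 0 ≤ f x := fun x =>
    intervalIntegral.integral_nonneg ht.le
      (fun s _ => mul_nonneg (pospow_nonneg _ _) (pospow_nonneg _ _))
  have hf_sm : StronglyMeasurable f := by
    have hFm : Measurable fun q : (ℝ × ℝ) × ℝ => pospow (q.2 - q.1.1) γ * pospow (q.2 - q.1.2) γ :=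
      ((measurable_pospow γ).comp (measurable_snd.sub (measurable_fst.comp measurable_fst))).mul
        ((measurable_pospow γ).comp (measurable_snd.sub (measurable_snd.comp measurable_fst)))
    have : f = fun x => ∫ s, pospow (s - x.1) γ * pospow (s - x.2) γ ∂μ :=
      funext fun x => intervalIntegral.integral_of_le ht.le
    rw [this]
    exact hFm.stronglyMeasurable.integral_prod_right'
  -- define the ENNReal kernel
  set G : ℝ × ℝ → ℝ → ℝ≥0∞ := fun x s =>
    ENNReal.ofReal (pospow (s - x.1) γ) * ENNReal.ofReal (pospow (s - x.2) γ) with hG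
  have hGm : ∀ x, Measurable (G x) := fun x =>
    (((measurable_pospow γ).comp (measurable_id.sub measurable_const)).ennreal_ofReal).mul
      (((measurable_pospow γ).comp (measurable_id.sub measurable_const)).ennreal_ofReal)
  -- rewrite the Bochner integral as a lintegral
  rw [integral_eq_lintegral_of_nonneg_ae (ae_of_all _ fun x => sq_nonneg (f x))
    ((hf_sm.measurable.pow_const 2).aestronglyMeasurable)]
  -- key identity
  have main : ∫⁻ x : ℝ × ℝ, ENNReal.ofReal (f x ^ 2)
      = ENNReal.ofReal (c ^ 2) * ENNReal.ofReal (t ^ (2*H) / (H * (2*H-1))) := by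
    -- Step A: a.e. rewrite to lintegral square
    have hdiag : (volume : Measure (ℝ × ℝ)) {p : ℝ × ℝ | p.1 = p.2} = 0 := by
      rw [Measure.volume_eq_prod]
      exact diag_null volume volume (fun x => Real.volume_singleton)
    have hae : ∀ᵐ x : ℝ × ℝ, x.1 ≠ x.2 := measure_eq_zero_iff_ae_notMem.1 hdiag
    have key1 : ∀ x : ℝ × ℝ, x.1 ≠ x.2 →
        ENNReal.ofReal (f x ^ 2) = (∫⁻ s, G x s ∂μ) ^ 2 := by
      intro x hx
      have hInt : IntegrableOn (fun s => pospow (s - x.1) γ * pospow (s - x.2) γ)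
          (Set.Ioc 0 t) := slice_int ⟨hH1, hH2⟩ hx
      have hofReal : ENNReal.ofReal (f x) = ∫⁻ s, G x s ∂μ := by
        rw [hf]
        simp only
        rw [intervalIntegral.integral_of_le ht.le]
        rw [ofReal_integral_eq_lintegral_ofReal hInt
          (ae_of_all _ fun s => mul_nonneg (pospow_nonneg _ _) (pospow_nonneg _ _))]
        exact lintegral_congr fun s => ENNReal.ofReal_mul (pospow_nonneg _ _)
      rw [sq, sq, ← hofReal, ← ENNReal.ofReal_mul (hf_nonneg x)]
    calc ∫⁻ x : ℝ × ℝ, ENNReal.ofReal (f x ^ 2)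
        = ∫⁻ x : ℝ × ℝ, (∫⁻ s, G x s ∂μ) ^ 2 :=
          lintegral_congr_ae (hae.mono fun x hx => key1 x hx)
      _ = ∫⁻ x : ℝ × ℝ, ∫⁻ p, G x p.1 * G x p.2 ∂(μ.prod μ) := by
          refine lintegral_congr fun x => ?_
          rw [sq, ← lintegral_prod_mul (hGm x).aemeasurable (hGm x).aemeasurable]
      _ = ∫⁻ p, (∫⁻ x : ℝ × ℝ, G x p.1 * G x p.2) ∂(μ.prod μ) := by
          refine lintegral_lintegral_swap ?_
          refine Measurable.aemeasurable ?_
          have base : ∀ (i j : (ℝ × ℝ) × ℝ × ℝ → ℝ), Measurable i → Measurable j →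
              Measurable fun q => ENNReal.ofReal (pospow (i q - j q) γ) := fun i j hi hj =>
            ((measurable_pospow γ).comp (hi.sub hj)).ennreal_ofReal
          exact (((base _ _ (measurable_fst.comp measurable_snd)
                (measurable_fst.comp measurable_fst)).mul
              (base _ _ (measurable_fst.comp measurable_snd)
                (measurable_snd.comp measurable_fst))).mul
            ((base _ _ (measurable_snd.comp measurable_snd)
                (measurable_fst.comp measurable_fst)).mul
              (base _ _ (measurable_snd.comp measurable_snd)
                (measurable_snd.comp measurable_fst))))
      _ = ∫⁻ p, ENNReal.ofReal (c ^ 2)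
            * ENNReal.ofReal (pospow |p.1 - p.2| (2*H-2)) ∂(μ.prod μ) := by
          have hdiag2 : (μ.prod μ) {p : ℝ × ℝ | p.1 = p.2} = 0 := by
            refine diag_null μ μ (fun x => ?_)
            rw [hμ, Measure.restrict_apply (measurableSet_singleton x)]
            exact measure_mono_null inter_subset_left Real.volume_singleton
          have hae2 : ∀ᵐ p ∂(μ.prod μ), p.1 ≠ p.2 := measure_eq_zero_iff_ae_notMem.1 hdiag2
          refine lintegral_congr_ae (hae2.mono fun p hp => ?_)
          show (∫⁻ x : ℝ × ℝ, G x p.1 * G x p.2)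
            = ENNReal.ofReal (c ^ 2) * ENNReal.ofReal (pospow |p.1 - p.2| (2*H-2))
          have habs : (0:ℝ) < |p.1 - p.2| := abs_pos.2 (sub_ne_zero.2 hp)
          have hne : (2*H-2 : ℝ) ≠ 0 := (by linarith : (2*H-2 : ℝ) < 0).ne
          have hre : ∀ x : ℝ × ℝ, G x p.1 * G x p.2
              = (fun y => ENNReal.ofReal (pospow (p.1 - y) γ)
                  * ENNReal.ofReal (pospow (p.2 - y) γ)) x.1
                * (fun y => ENNReal.ofReal (pospow (p.1 - y) γ)
                  * ENNReal.ofReal (pospow (p.2 - y) γ)) x.2 := by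
            intro x
            simp only [hG]
            ring
          have hm : Measurable fun y : ℝ => ENNReal.ofReal (pospow (p.1 - y) γ)
              * ENNReal.ofReal (pospow (p.2 - y) γ) :=
            (((measurable_pospow γ).comp (measurable_const.sub measurable_id)).ennreal_ofReal).mul
              (((measurable_pospow γ).comp (measurable_const.sub measurable_id)).ennreal_ofReal)
          rw [lintegral_congr hre, Measure.volume_eq_prod,
            lintegral_prod_mul hm.aemeasurable hm.aemeasurable,
            lemA2 ⟨hH1, hH2⟩ hp,
            ← ENNReal.ofReal_mul (mul_nonneg hc0 (Real.rpow_nonneg (abs_nonneg _) _)),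
            ← ENNReal.ofReal_mul (sq_nonneg c)]
          congr 1
          have hA : |p.1-p.2| ^ (H-1) * |p.1-p.2| ^ (H-1) = |p.1-p.2| ^ (2*H-2) := by
            rw [← Real.rpow_add habs, show (H-1) + (H-1) = 2*H-2 by ring]
          rw [pospow_abs_eq hne, ← hA]
          ring
      _ = ENNReal.ofReal (c ^ 2)
            * ∫⁻ p, ENNReal.ofReal (pospow |p.1 - p.2| (2*H-2)) ∂(μ.prod μ) :=
          lintegral_const_mul' _ _ ENNReal.ofReal_ne_top
      _ = ENNReal.ofReal (c ^ 2) * ENNReal.ofReal (t ^ (2*H) / (H * (2*H-1))) := by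
          congr 1
          have hmW : Measurable fun p : ℝ × ℝ => ENNReal.ofReal (pospow |p.1 - p.2| (2*H-2)) :=
            ((measurable_pospow (2*H-2)).comp
              ((measurable_fst.sub measurable_snd).abs)).ennreal_ofReal
          rw [lintegral_prod _ hmW.aemeasurable]
          rw [← time_lintegral ⟨hH1, hH2⟩ ht]
          refine lintegral_congr fun s => lintegral_congr fun r => ?_
          rw [pospow_abs_eq (by intro h; exact absurd (by linarith : H = 1) hH2.ne) (s - r)]
  rw [main, ← ENNReal.ofReal_mul (sq_nonneg c), ENNReal.toReal_ofReal ?pos, mul_div_assoc]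
  case pos =>
    have h1 : (0:ℝ) ≤ t ^ (2*H) := Real.rpow_nonneg ht.le _
    have h2 : (0:ℝ) < H * (2*H-1) := by nlinarith
    positivity
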